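/- Let X_1, ..., X_n be i.i.d. random variables on [0,1] with mean μ, and let X̄ be their average. Then with probability at least 1 - ρ, |X̄ - μ| ≤ sqrt(3 log(2/ρ) X̄ / n) + 3 log(2/ρ)/n. -/

import Mathlib

open MeasureTheory ProbabilityTheory

set_option maxHeartbeats 1000000

lemma exp_le_quad {s : ℝ} (h0 : 0 ≤ s) (h1 : s ≤ 1) :
    Real.exp s ≤ 1 + s + 3/4 * s^2 := by
  have h := Real.exp_bound' h0 h1 (n := 2) (by norm_num)
  simp [Finset.sum_range_succ] at h
  nlinarith [h]

lemma exp_neg_le_quad {s : ℝ} (hs : 0 ≤ s) :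
    Real.exp (-s) ≤ 1 - s + s^2/2 := by
  have h := Real.sum_le_exp_of_nonneg hs 3
  simp [Finset.sum_range_succ] at h
  have h' : 1 + s + s^2/2 ≤ Real.exp s := by nlinarith [h]
  have hpos : (0:ℝ) < 1 + s + s^2/2 := by positivity
  rw [Real.exp_neg]
  have h2 : (Real.exp s)⁻¹ ≤ (1 + s + s^2/2)⁻¹ := inv_anti₀ hpos h'
  refine h2.trans ?_
  rw [inv_le_iff_one_le_mul₀ hpos]
  nlinarith

lemma exp_mul_le_of_mem_Icc {s x : ℝ} (h0 : 0 ≤ x) (h1 : x ≤ 1) :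
    Real.exp (s * x) ≤ 1 + (Real.exp s - 1) * x := by
  have h := convexOn_exp.2 (Set.mem_univ (0:ℝ)) (Set.mem_univ s)
    (by linarith : (0:ℝ) ≤ 1 - x) h0 (by ring)
  simp only [smul_eq_mul, mul_zero, zero_add, Real.exp_zero, mul_one] at h
  calc Real.exp (s * x) = Real.exp (x * s) := by rw [mul_comm]
    _ ≤ (1 - x) * 1 + x * Real.exp s := by simpa using h
    _ = 1 + (Real.exp s - 1) * x := by ring

theorem multiplicative_chernoff {Ω : Type*} [MeasurableSpace Ω]
    (μ : Measure Ω) [IsProbabilityMeasure μ]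
    (n : ℕ) (hn : 0 < n) (X : Fin n → Ω → ℝ)
    (hmeas : ∀ i, Measurable (X i))
    (hindep : iIndepFun X μ)
    (hident : ∀ i, μ.map (X i) = μ.map (X ⟨0, hn⟩))
    (hbound : ∀ i, ∀ᵐ ω ∂μ, X i ω ∈ Set.Icc (0 : ℝ) 1)
    (m : ℝ) (hm : m = μ[X ⟨0, hn⟩])
    (ρ : ℝ) (hρ : ρ ∈ Set.Ioo (0 : ℝ) 1) :
    ENNReal.ofReal (1 - ρ) ≤
      μ {ω | |(∑ i, X i ω) / n - m| ≤
        Real.sqrt (3 * Real.log (2 / ρ) * ((∑ i, X i ω) / n) / n)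
          + 3 * Real.log (2 / ρ) / n} := by
  obtain ⟨hρ0, hρ1⟩ := hρ
  have hn' : (0:ℝ) < n := by exact_mod_cast hn
  set i₀ : Fin n := ⟨0, hn⟩ with hi₀
  set a := Real.log (2 / ρ) with ha
  have ha_pos : 0 < a := Real.log_pos (by rw [lt_div_iff₀ hρ0]; linarith)
  have hexp_a : Real.exp (-a) = ρ / 2 := by
    rw [Real.exp_neg, ha, Real.exp_log (by positivity), inv_div]
  set b := a / n with hb
  have hb_pos : 0 < b := by positivity
  have hab : a = n * b := by rw [hb]; field_simp
  -- basic integrability and bounds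
  have hint : ∀ i, Integrable (X i) μ := fun i =>
    (integrable_const (1:ℝ)).mono' (hmeas i).aestronglyMeasurable
      ((hbound i).mono fun ω h => by
        rw [Real.norm_eq_abs, abs_le]; exact ⟨by linarith [h.1], h.2⟩)
  have hm0 : 0 ≤ m := by
    rw [hm]; exact integral_nonneg_of_ae ((hbound i₀).mono fun ω h => h.1)
  have hSmeas : Measurable (fun ω => ∑ i, X i ω) :=
    Finset.measurable_sum Finset.univ fun i _ => hmeas i
  have hSbound : ∀ᵐ ω ∂μ, ∀ i, X i ω ∈ Set.Icc (0:ℝ) 1 := ae_all_iff.2 hbound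
  have hint_exp : ∀ s : ℝ, Integrable (fun ω => Real.exp (s * (∑ i, X i ω))) μ := by
    intro s
    refine (integrable_const (Real.exp (|s| * n))).mono'
      ((hSmeas.const_mul s).exp.aestronglyMeasurable) (hSbound.mono fun ω h => ?_)
    rw [Real.norm_eq_abs, Real.abs_exp]
    apply Real.exp_le_exp.2
    have h1 : ∑ i, X i ω ≤ ∑ _i : Fin n, (1:ℝ) :=
      Finset.sum_le_sum fun i _ => (h i).2
    have h2 : (0:ℝ) ≤ ∑ i, X i ω :=
      Finset.sum_nonneg fun i _ => (h i).1
    simp only [Finset.sum_const, Finset.card_univ, Fintype.card_fin, nsmul_eq_mul,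
      mul_one] at h1
    calc s * (∑ i, X i ω) ≤ |s| * (∑ i, X i ω) :=
          mul_le_mul_of_nonneg_right (le_abs_self s) h2
      _ ≤ |s| * n := mul_le_mul_of_nonneg_left h1 (abs_nonneg s)
  -- mgf bounds
  have hmgf_single : ∀ s : ℝ, ∀ i, mgf (X i) μ s = mgf (X i₀) μ s := by
    intro s i
    have hc : AEStronglyMeasurable (fun x : ℝ => Real.exp (s * x)) (μ.map (X i)) :=
      (Real.continuous_exp.comp (continuous_const.mul continuous_id)).aestronglyMeasurable
    have hc0 : AEStronglyMeasurable (fun x : ℝ => Real.exp (s * x)) (μ.map (X i₀)) :=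
      (Real.continuous_exp.comp (continuous_const.mul continuous_id)).aestronglyMeasurable
    simp only [mgf]
    rw [← integral_map (hmeas i).aemeasurable hc, hident i, hi₀,
      integral_map (hmeas i₀).aemeasurable hc0]
  have hmgf_le : ∀ s : ℝ, mgf (X i₀) μ s ≤ Real.exp (m * (Real.exp s - 1)) := by
    intro s
    have h1 : mgf (X i₀) μ s ≤ 1 + m * (Real.exp s - 1) := by
      simp only [mgf]
      have hint1 : Integrable (fun ω => Real.exp (s * X i₀ ω)) μ := by
        refine (integrable_const (Real.exp |s|)).mono'
          (((hmeas i₀).const_mul s).exp.aestronglyMeasurable)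
          ((hbound i₀).mono fun ω h => ?_)
        rw [Real.norm_eq_abs, Real.abs_exp]
        apply Real.exp_le_exp.2
        calc s * X i₀ ω ≤ |s| * X i₀ ω :=
              mul_le_mul_of_nonneg_right (le_abs_self s) h.1
          _ ≤ |s| * 1 := mul_le_mul_of_nonneg_left h.2 (abs_nonneg s)
          _ = |s| := mul_one _
      have hint2 : Integrable (fun ω => 1 + (Real.exp s - 1) * X i₀ ω) μ :=
        (integrable_const 1).add ((hint i₀).const_mul _)
      have h2 := integral_mono_ae hint1 hint2
        ((hbound i₀).mono fun ω h => exp_mul_le_of_mem_Icc h.1 h.2)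
      refine h2.trans_eq ?_
      rw [integral_add (integrable_const 1) ((hint i₀).const_mul _),
        integral_const, integral_const_mul]
      simp [hm, mul_comm]
    refine h1.trans ?_
    have := Real.add_one_le_exp (m * (Real.exp s - 1))
    linarith
  have hmgf_sum : ∀ s : ℝ, mgf (fun ω => ∑ i, X i ω) μ s
      ≤ Real.exp ((n:ℝ) * (m * (Real.exp s - 1))) := by
    intro s
    have heq : (fun ω => ∑ i, X i ω) = ∑ i : Fin n, X i := by
      funext ω; rw [Finset.sum_apply]
    rw [heq, hindep.mgf_sum hmeas]
    have hc : ∀ i : Fin n, i ∈ Finset.univ → mgf (X i) μ s = mgf (X i₀) μ s :=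
      fun i _ => hmgf_single s i
    rw [Finset.prod_congr rfl hc, Finset.prod_const, Finset.card_univ, Fintype.card_fin]
    calc mgf (X i₀) μ s ^ n ≤ Real.exp (m * (Real.exp s - 1)) ^ n :=
          pow_le_pow_left₀ mgf_nonneg (hmgf_le s) n
      _ = Real.exp ((n:ℝ) * (m * (Real.exp s - 1))) := by
          rw [← Real.exp_nat_mul]
  -- Chernoff wrappers
  have hcher_up : ∀ s q : ℝ, 0 ≤ s →
      (μ {ω | q ≤ ∑ i, X i ω}).toReal
        ≤ Real.exp (-s * q + (n:ℝ) * (m * (Real.exp s - 1))) := by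
    intro s q hs
    have h := measure_ge_le_exp_mul_mgf (μ := μ) (X := fun ω => ∑ i, X i ω) q hs (hint_exp s)
    refine h.trans ?_
    rw [Real.exp_add]
    exact mul_le_mul_of_nonneg_left (hmgf_sum s) (Real.exp_pos _).le
  have hcher_low : ∀ s q : ℝ, 0 ≤ s →
      (μ {ω | ∑ i, X i ω ≤ q}).toReal
        ≤ Real.exp (s * q + (n:ℝ) * (m * (Real.exp (-s) - 1))) := by
    intro s q hs
    have h := measure_le_le_exp_mul_mgf (μ := μ) (X := fun ω => ∑ i, X i ω) q
      (neg_nonpos.2 hs) (hint_exp (-s))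
    refine h.trans ?_
    rw [Real.exp_add, neg_neg]
    exact mul_le_mul_of_nonneg_left (hmgf_sum (-s)) (Real.exp_pos _).le
  -- upper threshold
  set wU := max (3*b) (Real.sqrt (3*b*m)) with hwU
  have hwU0 : 0 < wU := lt_max_of_lt_left (by positivity)
  have hwU3b : 3*b ≤ wU := le_max_left _ _
  have hwUsq : 3*b*m ≤ wU^2 := by
    have h1 : Real.sqrt (3*b*m) ≤ wU := le_max_right _ _
    have h2 : Real.sqrt (3*b*m)^2 ≤ wU^2 :=
      pow_le_pow_left₀ (Real.sqrt_nonneg _) h1 2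
    rwa [Real.sq_sqrt (by positivity)] at h2
  -- upper tail bound
  have hU : (μ {ω | (n:ℝ) * (m + wU) ≤ ∑ i, X i ω}).toReal ≤ ρ/2 := by
    rw [← hexp_a]
    by_cases hcase : wU ≤ 3/2 * m
    · have hmpos : 0 < m := by nlinarith
      set s := 2*wU/(3*m) with hs
      have hs0 : 0 < s := by positivity
      have hs1 : s ≤ 1 := by rw [hs, div_le_one (by positivity)]; nlinarith
      refine (hcher_up s _ hs0.le).trans ?_
      apply Real.exp_le_exp.2
      have hexp_s := exp_le_quad hs0.le hs1
      have heq : m * (s + 3/4 * s^2) = s * (m + wU) - wU^2/(3*m) := by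
        rw [hs]; field_simp; ring
      have key : m * (Real.exp s - 1) ≤ s * (m + wU) - wU^2/(3*m) := by
        have h1 : m * (Real.exp s - 1) ≤ m * (s + 3/4 * s^2) := by nlinarith
        exact h1.trans_eq heq
      have h2 : b ≤ wU^2/(3*m) := by
        rw [le_div_iff₀ (by positivity)]; nlinarith
      calc -s * ((n:ℝ)*(m+wU)) + (n:ℝ) * (m * (Real.exp s - 1))
          ≤ -s * ((n:ℝ)*(m+wU)) + (n:ℝ) * (s * (m + wU) - wU^2/(3*m)) := by
            exact add_le_add_right (mul_le_mul_of_nonneg_left key hn'.le) _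
        _ = -(n:ℝ) * (wU^2/(3*m)) := by ring
        _ ≤ -(n:ℝ) * b := by
            rw [neg_mul, neg_mul, neg_le_neg_iff]
            exact mul_le_mul_of_nonneg_left h2 hn'.le
        _ = -a := by rw [hab]; ring
    · push_neg at hcase
      refine (hcher_up 1 _ zero_le_one).trans ?_
      apply Real.exp_le_exp.2
      have he : Real.exp 1 ≤ 1 + 1 + 3/4 * 1^2 := exp_le_quad zero_le_one le_rfl
      have he' : Real.exp 1 - 1 ≤ 7/4 := by nlinarith [he]
      have h1 : m * (Real.exp 1 - 1) ≤ m * (7/4) :=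
        mul_le_mul_of_nonneg_left he' hm0
      have h2 : -1 * ((n:ℝ)*(m+wU)) + (n:ℝ) * (m * (Real.exp 1 - 1))
          ≤ (n:ℝ) * (7/4 * m - (m + wU)) := by
        have h1' := mul_le_mul_of_nonneg_left h1 hn'.le
        linarith [h1']
      refine h2.trans ?_
      have h3 : 7/4 * m - (m + wU) ≤ -(3/2) * b := by linarith
      calc (n:ℝ) * (7/4 * m - (m + wU)) ≤ (n:ℝ) * (-(3/2) * b) :=
            mul_le_mul_of_nonneg_left h3 hn'.le
        _ ≤ -a := by rw [hab]; nlinarith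
  -- lower tail bound (only valid when 3b < m)
  have hL : 3*b < m →
      (μ {ω | ∑ i, X i ω ≤ (n:ℝ) * (m - Real.sqrt (3*b*m))}).toReal ≤ ρ/2 := by
    intro hm3b
    have hmpos : 0 < m := by linarith
    set v := Real.sqrt (3*b*m) with hv
    have hv0 : 0 < v := Real.sqrt_pos.2 (by positivity)
    have hvsq : v^2 = 3*b*m := Real.sq_sqrt (by positivity)
    set s := v/m with hs
    have hs0 : 0 < s := by positivity
    rw [← hexp_a]
    refine (hcher_low s _ hs0.le).trans ?_
    apply Real.exp_le_exp.2
    have hexp_s := exp_neg_le_quad hs0.le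
    have heq : m * (-s + s^2/2) = -s*m + v^2/(2*m) := by
      rw [hs]; field_simp
    have key : m * (Real.exp (-s) - 1) ≤ -s*m + v^2/(2*m) := by
      have h1 : m * (Real.exp (-s) - 1) ≤ m * (-s + s^2/2) := by nlinarith
      exact h1.trans_eq heq
    have h2 : s * ((n:ℝ)*(m - v)) + (n:ℝ) * (m * (Real.exp (-s) - 1))
        ≤ (n:ℝ) * (s*(m-v) + (-s*m + v^2/(2*m))) := by nlinarith
    refine h2.trans ?_
    have h3 : s*(m-v) + (-s*m + v^2/(2*m)) = -(3/2)*b := by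
      have h3' : s*(m-v) + (-s*m + v^2/(2*m)) = -v^2/(2*m) := by
        rw [hs]; field_simp; ring
      rw [h3', hvsq]; field_simp [hmpos.ne']
    rw [h3, hab]
    nlinarith
  -- target set
  set T := {ω | |(∑ i, X i ω) / n - m| ≤
      Real.sqrt (3 * a * ((∑ i, X i ω) / n) / n) + 3 * a / n} with hT
  have hTmeas : MeasurableSet T := by
    apply measurableSet_le
    · exact ((hSmeas.div_const _).sub measurable_const).abs
    · exact (Measurable.sqrt (((hSmeas.div_const _).const_mul _).div_const _)).add
        measurable_const
  have hN : μ {ω | ¬ ∀ i, X i ω ∈ Set.Icc (0:ℝ) 1} = 0 := ae_iff.1 hSbound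
  -- pointwise inclusion
  have hincl : ∀ ω, ω ∈ Tᶜ → (∀ i, X i ω ∈ Set.Icc (0:ℝ) 1) →
      ((n:ℝ) * (m + wU) ≤ ∑ i, X i ω) ∨
      (3*b < m ∧ ∑ i, X i ω ≤ (n:ℝ) * (m - Real.sqrt (3*b*m))) := by
    intro ω hω hgood
    simp only [hT, Set.mem_compl_iff, Set.mem_setOf_eq, not_le] at hω
    set Y := (∑ i, X i ω) / n with hY
    have hY0 : 0 ≤ Y :=
      div_nonneg (Finset.sum_nonneg fun i _ => (hgood i).1) hn'.le
    have hsum : ∑ i, X i ω = (n:ℝ) * Y := by rw [hY]; field_simp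
    have harg : 3 * a * Y / n = 3 * b * Y := by rw [hb]; ring
    have hconst : 3 * a / n = 3 * b := by rw [hb]; ring
    rw [harg, hconst] at hω
    rcases le_or_gt m Y with hYm | hYm
    · -- upper tail
      left
      set w := Y - m with hw
      have habs : |Y - m| = w := abs_of_nonneg (by linarith)
      rw [habs] at hω
      have h3b : 3*b < w := by
        have := Real.sqrt_nonneg (3*b*Y); linarith
      have hsqlt : 3*b*Y < (w - 3*b)^2 :=
        (Real.sqrt_lt' (by linarith : 0 < w - 3*b)).1 (by linarith)
      rw [show Y = m + w by rw [hw]; ring] at hsqlt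
      have hwsq : 3*b*m < w^2 := by nlinarith
      have hww : wU ≤ w := by
        apply max_le (by linarith)
        have h5 : Real.sqrt (3*b*m) ≤ Real.sqrt (w^2) := Real.sqrt_le_sqrt hwsq.le
        rwa [Real.sqrt_sq (by linarith : 0 ≤ w)] at h5
      rw [hsum]
      nlinarith
    · -- lower tail
      right
      set u := m - Y with hu
      have habs : |Y - m| = u := by
        rw [abs_sub_comm]; exact abs_of_nonneg (by linarith)
      rw [habs] at hω
      have h3b : 3*b < u := by
        have := Real.sqrt_nonneg (3*b*Y); linarith
      have hum : u ≤ m := by rw [hu]; linarith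
      refine ⟨by linarith, ?_⟩
      have hsqlt : 3*b*Y < (u - 3*b)^2 :=
        (Real.sqrt_lt' (by linarith : 0 < u - 3*b)).1 (by linarith)
      rw [show Y = m - u by rw [hu]; ring] at hsqlt
      have husq : 3*b*m < u^2 := by nlinarith
      have huu : Real.sqrt (3*b*m) ≤ u := by
        have h5 : Real.sqrt (3*b*m) ≤ Real.sqrt (u^2) := Real.sqrt_le_sqrt husq.le
        rwa [Real.sqrt_sq (by linarith : 0 ≤ u)] at h5
      rw [hsum]
      nlinarith
  -- measure of complement
  have hcompl : μ Tᶜ ≤ ENNReal.ofReal ρ := by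
    have hsub : Tᶜ ⊆ {ω | (n:ℝ) * (m + wU) ≤ ∑ i, X i ω}
        ∪ ({ω | 3*b < m ∧ ∑ i, X i ω ≤ (n:ℝ) * (m - Real.sqrt (3*b*m))}
          ∪ {ω | ¬ ∀ i, X i ω ∈ Set.Icc (0:ℝ) 1}) := by
      intro ω hω
      by_cases hgood : ∀ i, X i ω ∈ Set.Icc (0:ℝ) 1
      · rcases hincl ω hω hgood with h | h
        · exact Or.inl h
        · exact Or.inr (Or.inl h)
      · exact Or.inr (Or.inr hgood)
    refine (measure_mono hsub).trans ?_
    refine (measure_union_le _ _).trans ?_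
    have hb2 : μ ({ω | 3*b < m ∧ ∑ i, X i ω ≤ (n:ℝ) * (m - Real.sqrt (3*b*m))}
        ∪ {ω | ¬ ∀ i, X i ω ∈ Set.Icc (0:ℝ) 1}) ≤ ENNReal.ofReal (ρ/2) := by
      refine (measure_union_le _ _).trans ?_
      have hB : μ {ω | 3*b < m ∧ ∑ i, X i ω ≤ (n:ℝ) * (m - Real.sqrt (3*b*m))}
          ≤ ENNReal.ofReal (ρ/2) := by
        by_cases hm3b : 3*b < m
        · have : {ω | 3*b < m ∧ ∑ i, X i ω ≤ (n:ℝ) * (m - Real.sqrt (3*b*m))}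
              = {ω | ∑ i, X i ω ≤ (n:ℝ) * (m - Real.sqrt (3*b*m))} := by
            ext ω; simp [hm3b]
          rw [this, ← ENNReal.ofReal_toReal (measure_ne_top μ _)]
          exact ENNReal.ofReal_le_ofReal (hL hm3b)
        · have : {ω | 3*b < m ∧ ∑ i, X i ω ≤ (n:ℝ) * (m - Real.sqrt (3*b*m))}
              = (∅ : Set Ω) := by
            ext ω; simp [hm3b]
          rw [this]; simp
      rw [hN, add_zero]
      exact hB
    have hA : μ {ω | (n:ℝ) * (m + wU) ≤ ∑ i, X i ω} ≤ ENNReal.ofReal (ρ/2) := by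
      rw [← ENNReal.ofReal_toReal (measure_ne_top μ _)]
      exact ENNReal.ofReal_le_ofReal hU
    calc μ {ω | (n:ℝ) * (m + wU) ≤ ∑ i, X i ω}
          + μ ({ω | 3*b < m ∧ ∑ i, X i ω ≤ (n:ℝ) * (m - Real.sqrt (3*b*m))}
          ∪ {ω | ¬ ∀ i, X i ω ∈ Set.Icc (0:ℝ) 1})
        ≤ ENNReal.ofReal (ρ/2) + ENNReal.ofReal (ρ/2) := add_le_add hA hb2
      _ = ENNReal.ofReal ρ := by
          rw [← ENNReal.ofReal_add (by linarith) (by linarith)]; norm_num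
  -- conclude
  have hsplit : μ T + μ Tᶜ = 1 := by
    rw [measure_add_measure_compl hTmeas, measure_univ]
  have hfin : ENNReal.ofReal (1 - ρ) + μ Tᶜ ≤ μ T + μ Tᶜ := by
    rw [hsplit]
    calc ENNReal.ofReal (1 - ρ) + μ Tᶜ
        ≤ ENNReal.ofReal (1 - ρ) + ENNReal.ofReal ρ := add_le_add_right hcompl _
      _ = ENNReal.ofReal 1 := by
          rw [← ENNReal.ofReal_add (by linarith) (by linarith)]; norm_num
      _ = 1 := ENNReal.ofReal_one
  exact (ENNReal.add_le_add_iff_right (measure_ne_top μ Tᶜ)).1 hfin
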